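/- arXiv:math/0608510 — 3 statements merged into one kernel-verified Lean document; each statement's English description precedes it below -/
import Mathlib

section
/- Let q ∈ ℝ, q ≠ 0, and v > 0, and set A_T = max(2|t_q(v)| − 1, 0) and A_R = max(2|r_q(v)| − 1, 0). Then A_T + A_R < 1; that is, the sum of the amplitudes of the transmitted and reflected solitons is strictly less than the amplitude of the incoming unit soliton, so soliton scattering by the delta potential is nonelastic. -/
/-- For `q ≠ 0` and `v > 0`, the amplitudes `A_T = max(2|t_q(v)| - 1, 0)` and
`A_R = max(2|r_q(v)| - 1, 0)` of the transmitted and reflected solitons satisfy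
`A_T + A_R < 1`: soliton scattering by the delta potential is nonelastic. -/
theorem soliton_scattering_nonelastic (q v : ℝ) (hq : q ≠ 0) (hv : 0 < v)
    (AT AR : ℝ)
    (hAT : AT = max (2 * ‖Complex.I * (v : ℂ) / (Complex.I * v - q)‖ - 1) 0)
    (hAR : AR = max (2 * ‖(q : ℂ) / (Complex.I * v - q)‖ - 1) 0) :
    AT + AR < 1 := by
  set z : ℂ := Complex.I * v - q with hz
  have hzim : z.im = v := by simp [hz]
  have hz0 : z ≠ 0 := by
    intro h
    rw [h] at hzim
    simp at hzim
    linarith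
  have hznorm : (0:ℝ) < ‖z‖ := norm_pos_iff.mpr hz0
  have hzsq : ‖z‖ ^ 2 = q ^ 2 + v ^ 2 := by
    rw [Complex.sq_norm, Complex.normSq_apply]
    simp [hz]
    ring
  set A := ‖Complex.I * (v : ℂ) / z‖ with hA
  set B := ‖(q : ℂ) / z‖ with hB
  have hAval : A = v / ‖z‖ := by
    rw [hA, norm_div, norm_mul, Complex.norm_I, one_mul, Complex.norm_real,
      Real.norm_eq_abs, abs_of_pos hv]
  have hBval : B = |q| / ‖z‖ := by
    rw [hB, norm_div, Complex.norm_real, Real.norm_eq_abs]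
  have hApos : 0 < A := by
    rw [hAval]; positivity
  have hBpos : 0 < B := by
    rw [hBval]; exact div_pos (abs_pos.mpr hq) hznorm
  have hsum : A ^ 2 + B ^ 2 = 1 := by
    rw [hAval, hBval, div_pow, div_pow, ← add_div, hzsq]
    field_simp
    nlinarith [sq_abs q]
  have hA1 : A < 1 := by
    nlinarith [sq_nonneg B, hBpos]
  have hB1 : B < 1 := by
    nlinarith [sq_nonneg A, hApos]
  rw [hAT, hAR]
  rcases le_or_gt (2 * A - 1) 0 with h1 | h1 <;>
    rcases le_or_gt (2 * B - 1) 0 with h2 | h2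
  · rw [max_eq_right h1, max_eq_right h2]; norm_num
  · rw [max_eq_right h1, max_eq_left h2.le]; linarith
  · rw [max_eq_left h1.le, max_eq_right h2]; linarith
  · rw [max_eq_left h1.le, max_eq_left h2.le]
    nlinarith [sq_nonneg (A - B)]
end

section
/- Let q < 0 and λ > |q|, and define u(x,t) = e^{iλ²t/2}·λ·sech(λ|x| + artanh(|q|/λ)). Then for each t, u(·,t) is continuous on ℝ; u satisfies the free cubic NLS i·∂ₜu + (1/2)·∂ₓ²u + |u|²·u = 0 at every (x,t) with x ≠ 0; and the one-sided spatial derivatives satisfy the jump condition ∂ₓu(0⁺,t) − ∂ₓu(0⁻,t) = 2q·u(0,t) for every t. Hence u is a nonlinear bound state of the Gross–Pitaevskii equation i∂ₜu + (1/2)∂ₓ²u − qδ₀(x)u + u|u|² = 0. -/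
open Set

/-- Inverse hyperbolic tangent: `artanh y = (1/2) log((1+y)/(1-y))` (for `|y| < 1`). -/
noncomputable def artanh (y : ℝ) : ℝ := Real.log ((1 + y) / (1 - y)) / 2

lemma tanh_artanh {y : ℝ} (h0 : -1 < y) (h1 : y < 1) : Real.tanh (artanh y) = y := by
  have hr : (0:ℝ) < (1 + y) / (1 - y) := by
    apply div_pos <;> linarith
  have he : Real.exp (2 * artanh y) = (1 + y) / (1 - y) := by
    rw [artanh]; rw [show 2 * (Real.log ((1+y)/(1-y)) / 2) = Real.log ((1+y)/(1-y)) by ring]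
    exact Real.exp_log hr
  have hx := Real.exp_pos (artanh y)
  have h1y : (1:ℝ) - y ≠ 0 := by linarith
  have h2 : Real.exp (artanh y) * Real.exp (artanh y) * (1 - y) = 1 + y := by
    rw [← Real.exp_add]
    rw [show artanh y + artanh y = 2 * artanh y by ring, he]
    field_simp
  rw [Real.tanh_eq_sinh_div_cosh, Real.sinh_eq, Real.cosh_eq]
  rw [Real.exp_neg]
  have hch : Real.exp (artanh y) + (Real.exp (artanh y))⁻¹ ≠ 0 := by positivity
  field_simp
  linear_combination h2

lemma sech_hasDerivAt (lam a b y : ℝ) :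
    HasDerivAt (fun z => lam / Real.cosh (a*z+b))
      (-(lam * a * Real.sinh (a*y+b)) / Real.cosh (a*y+b)^2) y := by
  have h1 : HasDerivAt (fun z : ℝ => a*z+b) a y := by
    simpa using ((hasDerivAt_id y).const_mul a).add_const b
  have h2 : HasDerivAt (fun z => Real.cosh (a*z+b)) (Real.sinh (a*y+b) * a) y :=
    (Real.hasDerivAt_cosh _).comp y h1
  have h3 := (hasDerivAt_const y lam).div h2 (Real.cosh_pos (x := a*y+b)).ne'
  refine h3.congr_deriv ?_
  ring

lemma sech_hasDerivAt2 (lam a b y : ℝ) :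
    HasDerivAt (fun z => -(lam * a * Real.sinh (a*z+b)) / Real.cosh (a*z+b)^2)
      (a^2 * (lam / Real.cosh (a*y+b) - 2 * lam / Real.cosh (a*y+b)^3)) y := by
  have h1 : HasDerivAt (fun z : ℝ => a*z+b) a y := by
    simpa using ((hasDerivAt_id y).const_mul a).add_const b
  have h2 : HasDerivAt (fun z => Real.cosh (a*z+b)) (Real.sinh (a*y+b) * a) y :=
    (Real.hasDerivAt_cosh _).comp y h1
  have h2' : HasDerivAt (fun z => Real.cosh (a*z+b)^2)
      (2 * Real.cosh (a*y+b) * (Real.sinh (a*y+b) * a)) y := by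
    exact (h2.pow 2).congr_deriv (by rw [show (2:ℕ) - 1 = 1 from rfl]; push_cast; ring)
  have hs : HasDerivAt (fun z => Real.sinh (a*z+b)) (Real.cosh (a*y+b) * a) y :=
    (Real.hasDerivAt_sinh _).comp y h1
  have hn : HasDerivAt (fun z => -(lam * a * Real.sinh (a*z+b)))
      (-(lam * a * (Real.cosh (a*y+b) * a))) y := ((hs.const_mul (lam*a)).neg)
  have h3 := hn.div h2' (by positivity)
  refine h3.congr_deriv ?_
  have hc := Real.cosh_pos (x := a*y+b)
  have hid : Real.sinh (a*y+b)^2 = Real.cosh (a*y+b)^2 - 1 := by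
    have := Real.cosh_sq_sub_sinh_sq (a*y+b); linarith
  field_simp
  linear_combination (2*a^2*lam) * hid

/-- derivative of the complex-valued profile `y ↦ E * (lam / cosh (a y + b))`. -/
lemma profile_hasDerivAt (E : ℂ) (lam a b y : ℝ) :
    HasDerivAt (fun z : ℝ => E * ((lam / Real.cosh (a*z+b) : ℝ) : ℂ))
      (E * ((-(lam * a * Real.sinh (a*y+b)) / Real.cosh (a*y+b)^2 : ℝ) : ℂ)) y :=
  ((sech_hasDerivAt lam a b y).ofReal_comp).const_mul E

lemma profile_hasDerivAt2 (E : ℂ) (lam a b y : ℝ) :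
    HasDerivAt (fun z : ℝ => E * ((-(lam * a * Real.sinh (a*z+b)) / Real.cosh (a*z+b)^2 : ℝ) : ℂ))
      (E * ((a^2 * (lam / Real.cosh (a*y+b) - 2 * lam / Real.cosh (a*y+b)^3) : ℝ) : ℂ)) y :=
  ((sech_hasDerivAt2 lam a b y).ofReal_comp).const_mul E

/-- For `q < 0` and `λ > |q|`, the function
`u(x,t) = e^{iλ²t/2} λ sech(λ|x| + artanh(|q|/λ))` is, for each `t`, continuous in `x`;
it solves the free cubic NLS `i ∂ₜ u + (1/2) ∂ₓ² u + |u|² u = 0` at every `(x,t)` with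
`x ≠ 0`; and its one-sided spatial derivatives satisfy
`∂ₓu(0⁺,t) - ∂ₓu(0⁻,t) = 2 q u(0,t)`.  Hence `u` is a nonlinear bound state of the
Gross–Pitaevskii equation `i ∂ₜ u + (1/2) ∂ₓ² u - q δ₀ u + u|u|² = 0`. -/
theorem nonlinear_bound_state (q lam : ℝ) (hq : q < 0) (hlam : |q| < lam)
    (u : ℝ → ℝ → ℂ)
    (hu : ∀ x t : ℝ, u x t = Complex.exp (Complex.I * (lam ^ 2 : ℝ) * t / 2) *
      (lam / Real.cosh (lam * |x| + artanh (|q| / lam)))) :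
    (∀ t : ℝ, Continuous fun x => u x t) ∧
    (∀ x t : ℝ, x ≠ 0 →
      Complex.I * deriv (fun s => u x s) t
        + (1 / 2) * deriv (fun y => deriv (fun z => u z t) y) x
        + (‖u x t‖ : ℂ) ^ 2 * u x t = 0) ∧
    (∀ t : ℝ,
      derivWithin (fun x => u x t) (Ici 0) 0 - derivWithin (fun x => u x t) (Iic 0) 0
        = 2 * q * u 0 t) := by
  have hlam0 : 0 < lam := lt_of_le_of_lt (abs_nonneg q) hlam
  set c : ℝ := artanh (|q| / lam) with hc
  have hchpos : ∀ y : ℝ, 0 < Real.cosh y := Real.cosh_pos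
  -- rewrite u in the "profile" form
  have hu' : ∀ x t : ℝ, u x t = Complex.exp (Complex.I * (lam ^ 2 : ℝ) * t / 2) *
      ((lam / Real.cosh (lam * |x| + c) : ℝ) : ℂ) := by
    intro x t; rw [hu x t]; push_cast; ring
  refine ⟨?_, ?_, ?_⟩
  · -- continuity
    intro t
    have : (fun x => u x t) = fun x => Complex.exp (Complex.I * (lam ^ 2 : ℝ) * t / 2) *
        ((lam / Real.cosh (lam * |x| + c) : ℝ) : ℂ) := funext fun x => hu' x t
    rw [this]
    apply continuous_const.mul
    apply Complex.continuous_ofReal.comp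
    exact continuous_const.div
      (Real.continuous_cosh.comp ((continuous_const.mul continuous_abs).add continuous_const))
      (fun x => (hchpos _).ne')
  · -- NLS away from 0
    intro x t hx
    set E : ℂ := Complex.exp (Complex.I * (lam ^ 2 : ℝ) * t / 2) with hE
    -- time derivative
    set k : ℂ := Complex.I * (lam ^ 2 : ℝ) / 2 with hk
    have hkt : ∀ s : ℝ, Complex.I * (lam ^ 2 : ℝ) * (s:ℂ) / 2 = k * s := by
      intro s; rw [hk]; ring
    have hbase : HasDerivAt (fun w : ℂ => Complex.exp (k * w))
        (Complex.exp (k * (t:ℂ)) * k) (t:ℂ) := by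
      have h0 : HasDerivAt (fun w : ℂ => k * w) k (t:ℂ) := by
        simpa using (hasDerivAt_id (t:ℂ)).const_mul k
      exact (Complex.hasDerivAt_exp (k * (t:ℂ))).comp _ h0
    have ht : HasDerivAt (fun s : ℝ => u x s) (k * u x t) t := by
      have h1 := (hbase.comp_ofReal).mul_const ((lam / Real.cosh (lam * |x| + c) : ℝ) : ℂ)
      have h2 : (fun s : ℝ => u x s) = fun s : ℝ =>
          Complex.exp (k * (s:ℂ)) * ((lam / Real.cosh (lam * |x| + c) : ℝ) : ℂ) := by
        funext s; rw [hu' x s, hkt s]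
      rw [h2, hu' x t, hkt t]
      refine h1.congr_deriv ?_
      ring
    -- spatial derivatives
    have ha : ∃ a : ℝ, a^2 = lam^2 ∧ a * x = lam * |x| ∧
        (∀ᶠ y in nhds x, lam * |y| = a * y) := by
      rcases lt_or_gt_of_ne hx with hneg | hpos
      · refine ⟨-lam, by ring, by rw [abs_of_neg hneg]; ring, ?_⟩
        filter_upwards [Iio_mem_nhds hneg] with y hy
        rw [abs_of_neg hy]; ring
      · refine ⟨lam, rfl, by rw [abs_of_pos hpos], ?_⟩
        filter_upwards [Ioi_mem_nhds hpos] with y hy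
        rw [abs_of_pos hy]
    obtain ⟨a, ha2, hax, haev⟩ := ha
    have hev : (fun y => u y t) =ᶠ[nhds x]
        (fun y => E * ((lam / Real.cosh (a*y+c) : ℝ) : ℂ)) := by
      filter_upwards [haev] with y hy
      rw [hu' y t, hy]
    have hd1 : deriv (fun y => deriv (fun z => u z t) y) x =
        E * ((a^2 * (lam / Real.cosh (a*x+c) - 2 * lam / Real.cosh (a*x+c)^3) : ℝ) : ℂ) := by
      have hderivF : deriv (fun y => E * ((lam / Real.cosh (a*y+c) : ℝ) : ℂ)) =
          fun y => E * ((-(lam * a * Real.sinh (a*y+c)) / Real.cosh (a*y+c)^2 : ℝ) : ℂ) :=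
        funext fun y => (profile_hasDerivAt E lam a c y).deriv
      have hev2 : (deriv fun z => u z t) =ᶠ[nhds x]
          (fun y => E * ((-(lam * a * Real.sinh (a*y+c)) / Real.cosh (a*y+c)^2 : ℝ) : ℂ)) := by
        have := hev.deriv
        rw [hderivF] at this
        exact this
      rw [hev2.deriv_eq]
      exact (profile_hasDerivAt2 E lam a c x).deriv
    -- norm
    have hnorm : ‖u x t‖ = lam / Real.cosh (lam * |x| + c) := by
      rw [hu' x t, norm_mul, Complex.norm_exp,
        Complex.norm_real, Real.norm_eq_abs]
      have hre : (Complex.I * (((lam ^ 2 : ℝ)):ℂ) * (t:ℂ) / 2).re = 0 := by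
        have h9 : Complex.I * (((lam ^ 2 : ℝ)):ℂ) * (t:ℂ) / 2
            = ((lam ^ 2 * t / 2 : ℝ):ℂ) * Complex.I := by push_cast; ring
        rw [h9, Complex.re_ofReal_mul, Complex.I_re, mul_zero]
      rw [hre, Real.exp_zero, one_mul, abs_of_pos (div_pos hlam0 (hchpos _))]
    rw [ht.deriv, hd1, hnorm, hu' x t]
    rw [show a * x + c = lam * |x| + c by rw [hax]]
    rw [ha2, hk]
    rw [← hE]
    clear_value E
    clear hE
    push_cast
    set ch : ℝ := Real.cosh (lam * |x| + c) with hch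
    have hchne : Complex.cosh ((lam * |x| + c : ℝ):ℂ) ≠ 0 := by
      rw [← Complex.ofReal_cosh]
      exact_mod_cast (hchpos _).ne'
    field_simp
    ring_nf
    simp [Complex.I_sq]
  · -- jump condition
    intro t
    set E : ℂ := Complex.exp (Complex.I * (lam ^ 2 : ℝ) * t / 2) with hE
    have huniq : UniqueDiffWithinAt ℝ (Ici (0:ℝ)) 0 := uniqueDiffOn_Ici 0 0 self_mem_Ici
    have huniq' : UniqueDiffWithinAt ℝ (Iic (0:ℝ)) 0 := uniqueDiffOn_Iic 0 0 self_mem_Iic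
    have hplus : derivWithin (fun x => u x t) (Ici 0) 0 =
        E * ((-(lam * lam * Real.sinh c) / Real.cosh c^2 : ℝ) : ℂ) := by
      have heq : EqOn (fun x => u x t)
          (fun y => E * ((lam / Real.cosh (lam*y+c) : ℝ) : ℂ)) (Ici 0) := by
        intro y hy
        simp only
        rw [hu' y t, abs_of_nonneg (mem_Ici.mp hy)]
      rw [derivWithin_congr heq (by simpa using heq self_mem_Ici)]
      have := ((profile_hasDerivAt E lam lam c 0).hasDerivWithinAt (s := Ici 0)).derivWithin huniq
      rw [this]
      norm_num
    have hminus : derivWithin (fun x => u x t) (Iic 0) 0 =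
        E * ((-(lam * (-lam) * Real.sinh c) / Real.cosh c^2 : ℝ) : ℂ) := by
      have heq : EqOn (fun x => u x t)
          (fun y => E * ((lam / Real.cosh ((-lam)*y+c) : ℝ) : ℂ)) (Iic 0) := by
        intro y hy
        simp only
        rw [hu' y t, abs_of_nonpos (mem_Iic.mp hy),
          show lam * -y = -lam * y from by ring]
      rw [derivWithin_congr heq (by simpa using heq self_mem_Iic)]
      have := ((profile_hasDerivAt E lam (-lam) c 0).hasDerivWithinAt (s := Iic 0)).derivWithin huniq'
      rw [this]
      norm_num
    rw [hplus, hminus, hu' 0 t, ← hE]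
    have htanh : Real.sinh c * lam = |q| * Real.cosh c := by
      have h0 : (-1:ℝ) < |q| / lam := lt_of_lt_of_le neg_one_lt_zero (by positivity)
      have h1 : |q| / lam < 1 := (div_lt_one hlam0).mpr hlam
      have h2 := tanh_artanh h0 h1
      rw [← hc, Real.tanh_eq_sinh_div_cosh] at h2
      have hcc := (Real.cosh_pos (x := c)).ne'
      field_simp at h2
      linarith [h2]
    have habs : |q| = -q := abs_of_neg hq
    rw [habs] at htanh
    clear_value E
    clear hE
    have hsinh : Real.sinh c = -q * Real.cosh c / lam := by
      field_simp
      linarith [htanh]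
    rw [hsinh]
    have hchne : Complex.cosh ((c:ℝ):ℂ) ≠ 0 := by
      rw [← Complex.ofReal_cosh]
      exact_mod_cast (Real.cosh_pos (x := c)).ne'
    have hlamne : (lam : ℂ) ≠ 0 := by exact_mod_cast hlam0.ne'
    simp only [abs_zero, mul_zero, zero_add]
    push_cast
    field_simp
    ring
end

section
/- Let α ∈ (0,1) with α ≠ 1/2 and let λ ∈ ℝ. Let a(λ) = Γ(1/2 − iλ)² / (Γ(1/2 + α − iλ)·Γ(1/2 − α − iλ)) and b(λ) = i·sin(πα)/cosh(πλ), where Γ is the complex Gamma function. Then the Zakharov–Shabat unitarity relation holds: |a(λ)|² + |b(λ)|² = 1; equivalently, |Γ(1/2 − iλ)² / (Γ(1/2 + α − iλ)·Γ(1/2 − α − iλ))|² = 1 − sin²(πα)/cosh²(πλ). -/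
open Complex Real

/-- Zakharov–Shabat unitarity for the `α sech` potential: for `α ∈ (0,1)`, `α ≠ 1/2`,
and real `λ`, the scattering data
`a(λ) = Γ(1/2 - iλ)²/(Γ(1/2 + α - iλ) Γ(1/2 - α - iλ))` and
`b(λ) = i sin(πα)/cosh(πλ)` satisfy `|a(λ)|² + |b(λ)|² = 1`; equivalently
`|Γ(1/2 - iλ)²/(Γ(1/2 + α - iλ) Γ(1/2 - α - iλ))|² = 1 - sin²(πα)/cosh²(πλ)`. -/
theorem zakharov_shabat_unitarity (α lam : ℝ) (hα : α ∈ Set.Ioo (0 : ℝ) 1)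
    (hα' : α ≠ 1 / 2) (a b : ℂ)
    (ha : a = Complex.Gamma (1 / 2 - Complex.I * lam) ^ 2 /
      (Complex.Gamma (1 / 2 + α - Complex.I * lam) *
        Complex.Gamma (1 / 2 - α - Complex.I * lam)))
    (hb : b = Complex.I * Real.sin (Real.pi * α) / Real.cosh (Real.pi * lam)) :
    ‖a‖ ^ 2 + ‖b‖ ^ 2 = 1 ∧
    ‖a‖ ^ 2 = 1 - Real.sin (Real.pi * α) ^ 2 / Real.cosh (Real.pi * lam) ^ 2 := by
  have hcosh : (0:ℝ) < Real.cosh (Real.pi * lam) := Real.cosh_pos _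
  have hb2 : ‖b‖ ^ 2 = Real.sin (Real.pi * α) ^ 2 / Real.cosh (Real.pi * lam) ^ 2 := by
    rw [hb, norm_div, norm_mul, Complex.norm_I, one_mul, Complex.norm_real, Complex.norm_real,
      Real.norm_eq_abs, Real.norm_eq_abs, div_pow, _root_.sq_abs, _root_.sq_abs]
  set z1 : ℂ := 1 / 2 - Complex.I * lam with hz1
  set w : ℂ := 1 / 2 + α - Complex.I * lam with hw
  set w' : ℂ := 1 / 2 - α - Complex.I * lam with hw'
  have e1 : (starRingEnd ℂ) z1 = 1 - z1 := by
    simp only [hz1, map_sub, map_div₀, map_one, map_ofNat, map_mul, Complex.conj_I,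
      Complex.conj_ofReal]
    ring
  have e2 : (starRingEnd ℂ) w = 1 - w' := by
    simp only [hw, hw', map_sub, map_add, map_div₀, map_one, map_ofNat, map_mul, Complex.conj_I,
      Complex.conj_ofReal]
    ring
  have e3 : (starRingEnd ℂ) w' = 1 - w := by
    simp only [hw, hw', map_sub, map_add, map_div₀, map_one, map_ofNat, map_mul, Complex.conj_I,
      Complex.conj_ofReal]
    ring
  -- trig values
  have hS1 : Complex.sin (Real.pi * z1) = (Real.cosh (Real.pi * lam) : ℂ) := by
    have h : (Real.pi : ℂ) * z1 = (Real.pi : ℂ) / 2 - ((Real.pi * lam : ℝ) : ℂ) * Complex.I := by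
      rw [hz1]; push_cast; ring
    rw [h, Complex.sin_pi_div_two_sub, Complex.cos_mul_I, Complex.ofReal_cosh]
  have hSw : Complex.sin (Real.pi * w) * Complex.sin (Real.pi * w')
      = (Real.cosh (Real.pi * lam) : ℂ) ^ 2 - (Real.sin (Real.pi * α) : ℂ) ^ 2 := by
    have h1 : (Real.pi : ℂ) * w = (Real.pi : ℂ) / 2
        + (((Real.pi * α : ℝ) : ℂ) - ((Real.pi * lam : ℝ) : ℂ) * Complex.I) := by
      rw [hw]; push_cast; ring
    have h2 : (Real.pi : ℂ) * w' = (Real.pi : ℂ) / 2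
        - (((Real.pi * α : ℝ) : ℂ) + ((Real.pi * lam : ℝ) : ℂ) * Complex.I) := by
      rw [hw']; push_cast; ring
    rw [h1, h2, Complex.sin_pi_div_two_sub, Complex.sin_add, Complex.cos_pi_div_two,
      Complex.sin_pi_div_two, Complex.cos_add, Complex.cos_sub, Complex.sin_sub,
      Complex.cos_mul_I, Complex.sin_mul_I]
    have p1 : Complex.sin ((Real.pi * α : ℝ) : ℂ) = (Real.sin (Real.pi * α) : ℂ) :=
      (Complex.ofReal_sin _).symm
    have p2 : Complex.cos ((Real.pi * α : ℝ) : ℂ) = (Real.cos (Real.pi * α) : ℂ) :=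
      (Complex.ofReal_cos _).symm
    have pyth : (Real.cos (Real.pi * α) : ℂ) ^ 2 = 1 - (Real.sin (Real.pi * α) : ℂ) ^ 2 := by
      have h := Complex.sin_sq_add_cos_sq ((Real.pi * α : ℝ) : ℂ)
      rw [p1, p2] at h
      linear_combination h
    have hyp : Complex.sinh ((Real.pi * lam : ℝ) : ℂ) ^ 2
        = Complex.cosh ((Real.pi * lam : ℝ) : ℂ) ^ 2 - 1 := by
      linear_combination - Complex.cosh_sq_sub_sinh_sq ((Real.pi * lam : ℝ) : ℂ)
    rw [p1, p2, Complex.ofReal_cosh]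
    linear_combination (Complex.cosh ((Real.pi * lam : ℝ) : ℂ)) ^ 2 * pyth
      - ((Real.sin (Real.pi * α) : ℂ)) ^ 2 *
        ((Complex.sinh ((Real.pi * lam : ℝ) : ℂ)) ^ 2 * Complex.I_sq + hyp)
      + 2 * ((Real.sin (Real.pi * α) : ℂ)) ^ 2 * hyp
  -- nonvanishing facts
  have hπ : (Real.pi : ℂ) ≠ 0 := Complex.ofReal_ne_zero.mpr Real.pi_ne_zero
  have hchC : ((Real.cosh (Real.pi * lam) : ℝ) : ℂ) ≠ 0 := Complex.ofReal_ne_zero.mpr hcosh.ne'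
  have hcosne : Real.cos (Real.pi * α) ≠ 0 := by
    intro h
    rw [Real.cos_eq_zero_iff] at h
    obtain ⟨n, hn⟩ := h
    have hπpos := Real.pi_pos
    have hα2 : 2 * α = 2 * (n : ℝ) + 1 := by
      have hmul : Real.pi * (2 * α) = Real.pi * (2 * (n : ℝ) + 1) := by
        rw [mul_comm Real.pi α] at hn
        linarith [hn]
      have := mul_left_cancel₀ (ne_of_gt hπpos) hmul
      linarith
    have l1 : (n : ℝ) < 1 := by nlinarith [hα.2]
    have l2 : (-1 : ℝ) < (n : ℝ) := by nlinarith [hα.1]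
    have hn1 : n < 1 := by exact_mod_cast l1
    have hn2 : -1 < n := by exact_mod_cast l2
    have hn0 : n = 0 := by omega
    rw [hn0] at hα2
    apply hα'
    push_cast at hα2
    linarith
  have hposR : (0:ℝ) < Real.cosh (Real.pi * lam) ^ 2 - Real.sin (Real.pi * α) ^ 2 := by
    have h1 : Real.sin (Real.pi * α) ^ 2 = 1 - Real.cos (Real.pi * α) ^ 2 := by
      nlinarith [Real.sin_sq_add_cos_sq (Real.pi * α)]
    have h2 : (1:ℝ) ≤ Real.cosh (Real.pi * lam) := Real.one_le_cosh _
    have h3 : (0:ℝ) < Real.cos (Real.pi * α) ^ 2 := by positivity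
    nlinarith
  have hSwSw'ne : Complex.sin (Real.pi * w) * Complex.sin (Real.pi * w') ≠ 0 := by
    rw [hSw]
    have : (Real.cosh (Real.pi * lam) : ℂ) ^ 2 - (Real.sin (Real.pi * α) : ℂ) ^ 2
        = ((Real.cosh (Real.pi * lam) ^ 2 - Real.sin (Real.pi * α) ^ 2 : ℝ) : ℂ) := by
      push_cast; ring
    rw [this]
    exact Complex.ofReal_ne_zero.mpr hposR.ne'
  have hSwne : Complex.sin (Real.pi * w) ≠ 0 := fun h => hSwSw'ne (by rw [h, zero_mul])
  have hSw'ne : Complex.sin (Real.pi * w') ≠ 0 := fun h => hSwSw'ne (by rw [h, mul_zero])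
  clear_value z1 w w'
  -- main complex computation
  have r1 := Complex.Gamma_mul_Gamma_one_sub z1
  have r2 := Complex.Gamma_mul_Gamma_one_sub w
  have r3 := Complex.Gamma_mul_Gamma_one_sub w'
  have hAC : a * (starRingEnd ℂ) a
      = ((Real.cosh (Real.pi * lam) : ℂ) ^ 2 - (Real.sin (Real.pi * α) : ℂ) ^ 2) /
        (Real.cosh (Real.pi * lam) : ℂ) ^ 2 := by
    have step1 : a * (starRingEnd ℂ) a
        = (Complex.Gamma z1 * Complex.Gamma (1 - z1)) ^ 2 /
          ((Complex.Gamma w * Complex.Gamma (1 - w)) *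
            (Complex.Gamma w' * Complex.Gamma (1 - w'))) := by
      rw [ha, map_div₀, map_pow, map_mul, ← Complex.Gamma_conj, ← Complex.Gamma_conj,
        ← Complex.Gamma_conj, e1, e2, e3]
      ring
    have key : ∀ (p c s t : ℂ), p ≠ 0 → c ≠ 0 → s ≠ 0 → t ≠ 0 →
        (p / c) ^ 2 / ((p / s) * (p / t)) = s * t / c ^ 2 := by
      intros p c s t hp hc hs ht
      field_simp
    rw [step1, r1, r2, r3, hS1, key _ _ _ _ hπ hchC hSwne hSw'ne, hSw]
  have ha2 : ‖a‖ ^ 2 = 1 - Real.sin (Real.pi * α) ^ 2 / Real.cosh (Real.pi * lam) ^ 2 := by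
    rw [Complex.mul_conj] at hAC
    have hcast : ((Complex.normSq a : ℝ) : ℂ)
        = ((1 - Real.sin (Real.pi * α) ^ 2 / Real.cosh (Real.pi * lam) ^ 2 : ℝ) : ℂ) := by
      rw [hAC]
      have hch2 : Complex.cosh ((Real.pi : ℂ) * (lam : ℂ)) ≠ 0 := by
        rw [show ((Real.pi : ℂ) * (lam : ℂ)) = ((Real.pi * lam : ℝ) : ℂ) by push_cast; ring,
          ← Complex.ofReal_cosh]
        exact hchC
      push_cast
      rw [sub_div, div_self (pow_ne_zero 2 hch2)]
    have := Complex.ofReal_inj.mp hcast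
    rw [Complex.sq_norm, this]
  refine ⟨?_, ha2⟩
  rw [ha2, hb2]
  ring
end
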